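/- For every d ≥ 1 there is a constant C = C(d) such that for all n ≥ 1, |ψ(B_n) − (d/(d+2)) ω_d^{−2/d} n^{1+2/d}| ≤ C n^{1+1/d}. -/

import Mathlib

open scoped BigOperators Pointwise symmDiff
open MeasureTheory Filter

noncomputable section
open scoped Classical
namespace RotorRouterPaper

/-- Sites of the lattice `ℤ^d`. -/
abbrev Site (d : ℕ) := Fin d → ℤ

/-- The `i`-th standard basis vector of `ℤ^d`. -/
def unitVec (d : ℕ) (i : Fin d) : Site d := fun j => if j = i then 1 else 0

/-- Squared Euclidean norm of a lattice point. -/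
def nsq {d : ℕ} (x : Site d) : ℝ := ∑ i, ((x i : ℝ)) ^ 2

/-- Euclidean norm of a lattice point. -/
def enorm {d : ℕ} (x : Site d) : ℝ := Real.sqrt (nsq x)

/-- Adjacency `x ∼ y`: Euclidean distance one. -/
def Adj {d : ℕ} (x y : Site d) : Prop := nsq (x - y) = 1

/-- `ω_d`, the Lebesgue volume of the unit ball in `ℝ^d`. -/
def ballVol (d : ℕ) : ℝ := (volume (Metric.ball (0 : EuclideanSpace ℝ (Fin d)) 1)).toReal

/-- The lattice ball `B_n = {y ∈ ℤ^d : ω_d ‖y‖^d < n}`. -/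
def lball (d n : ℕ) : Set (Site d) := {y | ballVol d * enorm y ^ d < (n : ℝ)}

/-- Characterization of the expected exit time function of a (finite) region `A ⊆ ℤ^d`:
it vanishes off `A` and its discrete Laplacian is `-1` on `A`. -/
def IsExitFun (d : ℕ) (A : Set (Site d)) (e : Site d → ℝ) : Prop :=
  (∀ x, x ∉ A → e x = 0) ∧
  ∀ x ∈ A, (1 / (2 * (d : ℝ))) * (∑ i, (e (x + unitVec d i) + e (x - unitVec d i))) - e x = -1

/-- The expected exit time function `x ↦ e_x(A)` (the unique function satisfying
`IsExitFun` when `A` is finite). -/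
def exitFun (d : ℕ) (A : Set (Site d)) : Site d → ℝ :=
  if h : ∃ e, IsExitFun d A e then h.choose else 0

/-- `ē(A) = sup_x e_x(A)`. -/
def ebar (d : ℕ) (A : Set (Site d)) : ℝ := sSup (Set.range (exitFun d A))

/-- `φ(n) = sup {ē(A) - e_o(B_n) : A ⊆ ℤ^d, |A| = n}`. -/
def phi (d n : ℕ) : ℝ :=
  sSup {t | ∃ A : Set (Site d), A.Finite ∧ A.ncard = n ∧ t = ebar d A - exitFun d (lball d n) 0}

/-- `Φ(n) = ∑_{j=1}^n φ(j)`. -/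
def PhiSum (d n : ℕ) : ℝ := ∑ j ∈ Finset.Icc 1 n, phi d j

/-- `ψ(A) = ∑_{x ∈ A} ‖x‖²`. -/
def psi {d : ℕ} (A : Set (Site d)) : ℝ := ∑ᶠ x ∈ A, nsq x

/-- A cardinal direction in `ℤ^d`: one of `±e_1, …, ±e_d`. -/
abbrev Dir (d : ℕ) := Fin d × Bool

/-- The lattice step vector of a cardinal direction. -/
def dirVec (d : ℕ) (ε : Dir d) : Site d := if ε.2 then unitVec d ε.1 else -unitVec d ε.1

/-- A configuration of rotor stacks `r` (with `r x i` the direction used for the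
`(i+1)`-st visit to `x`) has discrepancy at most `D` if for every site, direction and `m ≥ 1`,
among the first `m` rotors of the stack each direction occurs `m/(2d)` times up to error `D`. -/
def HasDiscrepancy (d : ℕ) (D : ℝ) (r : Site d → ℕ → Dir d) : Prop :=
  ∀ (x : Site d) (ε : Dir d) (m : ℕ), 1 ≤ m →
    |(({i | i < m ∧ r x i = ε} : Set ℕ).ncard : ℝ) - (m : ℝ) / (2 * (d : ℝ))| ≤ D

/-- One step of rotor-router walk on a state (current position, visit counts so far):
the particle at `p` being visited for the `(c p + 1)`-st time moves in direction
`r p (c p)` and the visit count at `p` increases by one. -/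
def rstep {d : ℕ} (r : Site d → ℕ → Dir d) (s : Site d × (Site d → ℕ)) :
    Site d × (Site d → ℕ) :=
  (s.1 + dirVec d (r s.1 (s.2 s.1)), Function.update s.2 s.1 (s.2 s.1 + 1))

/-- The state after `t` steps of rotor-router walk started at the origin with visit counts `c`. -/
def walkState {d : ℕ} (r : Site d → ℕ → Dir d) (c : Site d → ℕ) (t : ℕ) :
    Site d × (Site d → ℕ) :=
  (rstep r)^[t] (0, c)

/-- The number of steps until the rotor-router walk started at the origin
(with carried-over visit counts `c`) first leaves the region `A`. -/
def exitSteps {d : ℕ} (r : Site d → ℕ → Dir d) (A : Set (Site d)) (c : Site d → ℕ) : ℕ :=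
  sInf {t | (walkState r c t).1 ∉ A}

/-- The state of rotor-router aggregation after `n` particles have walked and settled:
`(aggState r n).1` is the occupied region `A_{n+1}`, `(aggState r n).2.1` the accumulated
visit counts, and `(aggState r n).2.2` the total number `T_n` of steps taken so far. -/
def aggState {d : ℕ} (r : Site d → ℕ → Dir d) : ℕ → Set (Site d) × (Site d → ℕ) × ℕ
  | 0 => ({0}, fun _ => 0, 0)
  | n + 1 =>
      let s := aggState r n
      let τ := exitSteps r s.1 s.2.1
      (insert (walkState r s.2.1 τ).1 s.1, (walkState r s.2.1 τ).2, s.2.2 + τ)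

/-- The region `A_n` of rotor-router aggregation (for `n ≥ 1`). -/
def aggRegion {d : ℕ} (r : Site d → ℕ → Dir d) (n : ℕ) : Set (Site d) :=
  (aggState r (n - 1)).1

/-- `T_n`, the total number of steps taken by the first `n` particles. -/
def totalSteps {d : ℕ} (r : Site d → ℕ → Dir d) (n : ℕ) : ℕ := (aggState r n).2.2

/-- `A^□ = A + [-1/2,1/2]^d ⊆ ℝ^d`. -/
def box (d : ℕ) (A : Set (Site d)) : Set (EuclideanSpace ℝ (Fin d)) :=
  {z | ∃ x ∈ A, ∀ i, |z i - (x i : ℝ)| ≤ 1 / 2}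

/-- The closed Euclidean ball of unit volume centered at the origin of `ℝ^d`. -/
def unitVolBall (d : ℕ) : Set (EuclideanSpace ℝ (Fin d)) :=
  Metric.closedBall 0 (ballVol d ^ (-(1 : ℝ) / (d : ℝ)))

/-- `A ⊆ ℤ^d` is orthoconvex if every line parallel to a coordinate axis meets `A`
in an interval. -/
def Orthoconvex (d : ℕ) (A : Set (Site d)) : Prop :=
  ∀ x ∈ A, ∀ i : Fin d, ∀ k : ℤ, 0 < k → x + k • unitVec d i ∈ A →
    ∀ j : ℤ, 0 < j → j < k → x + j • unitVec d i ∈ A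

/-- The nonnegative orthant `Q ⊆ ℤ^d`. -/
def orthant (d : ℕ) : Set (Site d) := {x | ∀ i, 0 ≤ x i}

/-- The cube `C(o,r) = {x : ‖x‖_∞ ≤ r}`. -/
def cubeSet (d : ℕ) (r : ℕ) : Set (Site d) := {x | ∀ i, |x i| ≤ (r : ℤ)}

/-- The boundary `∂C(o,r) = {x : ‖x‖_∞ = r + 1 and x ∼ y for some y ∈ C(o,r)}`. -/
def cubeBdry (d : ℕ) (r : ℕ) : Set (Site d) :=
  {x | (∀ i, |x i| ≤ (r : ℤ) + 1) ∧ (∃ i, |x i| = (r : ℤ) + 1) ∧ ∃ y ∈ cubeSet d r, Adj x y}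

/-- Characterization of `h_r(x) = P_x(T_Q > T_{∂C(o,r)})`: it vanishes on
`Q ∩ (C(o,r) ∪ ∂C(o,r))`, equals `1` on `∂C(o,r) ∖ Q`, is discrete harmonic on
`C(o,r) ∖ Q`, and (as a normalization) vanishes off `C(o,r) ∪ ∂C(o,r)`. -/
def IsOrthHarm (d : ℕ) (r : ℕ) (h : Site d → ℝ) : Prop :=
  (∀ x, x ∉ cubeSet d r ∪ cubeBdry d r → h x = 0) ∧
  (∀ x ∈ orthant d ∩ (cubeSet d r ∪ cubeBdry d r), h x = 0) ∧
  (∀ x ∈ cubeBdry d r \ orthant d, h x = 1) ∧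
  (∀ x ∈ cubeSet d r \ orthant d,
    h x = (1 / (2 * (d : ℝ))) * ∑ i, (h (x + unitVec d i) + h (x - unitVec d i)))

/-- The function `h_r` of the previous characterization. -/
def orthHarm (d : ℕ) (r : ℕ) : Site d → ℝ :=
  if h : ∃ f, IsOrthHarm d r f then h.choose else 0

/-- `p(k,r) = sup {h_r(x) : ‖x‖_∞ ≤ k}`. -/
def pkr (d k r : ℕ) : ℝ :=
  sSup {t | ∃ x : Site d, (∀ i, |x i| ≤ (k : ℤ)) ∧ t = orthHarm d r x}

/-- The exponent `γ_d` of Theorem 3.1. -/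
def gam (d : ℕ) : ℝ :=
  if d = 1 then 1 else if d = 2 then 1 / 3
  else (2 : ℝ) ^ (-(d : ℝ)) / (2 * (d : ℝ) ^ 2 * Real.log 3)

section PsiAux

open MeasureTheory Metric Set

variable {d : ℕ}

/-- Embedding of lattice points into Euclidean space. -/
def emb {d : ℕ} (x : Site d) : EuclideanSpace ℝ (Fin d) := WithLp.toLp 2 (fun i => (x i : ℝ))

lemma nsq_nonneg (x : Site d) : 0 ≤ nsq x :=
  Finset.sum_nonneg fun _ _ => sq_nonneg _

lemma enorm_nonneg' (x : Site d) : 0 ≤ enorm x := Real.sqrt_nonneg _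

lemma norm_emb (x : Site d) : ‖emb x‖ = enorm x := by
  rw [EuclideanSpace.norm_eq, enorm]
  congr 1
  simp [nsq, emb, sq_abs]

lemma sq_norm_emb (x : Site d) : ‖emb x‖ ^ 2 = nsq x := by
  rw [norm_emb, enorm, Real.sq_sqrt (nsq_nonneg x)]

/-- The half-open unit cube centered at a lattice point. -/
def cube {d : ℕ} (x : Site d) : Set (EuclideanSpace ℝ (Fin d)) :=
  (MeasurableEquiv.toLp 2 (Fin d → ℝ)).symm ⁻¹'
    (Set.univ.pi fun i => Set.Ico ((x i : ℝ) - 2⁻¹) ((x i : ℝ) + 2⁻¹))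

lemma mem_cube {x : Site d} {z : EuclideanSpace ℝ (Fin d)} :
    z ∈ cube x ↔ ∀ i, (x i : ℝ) - 2⁻¹ ≤ z i ∧ z i < (x i : ℝ) + 2⁻¹ := by
  simp [cube, Set.mem_pi]

lemma measurableSet_cube (x : Site d) : MeasurableSet (cube x) :=
  (MeasurableSet.univ_pi fun _ => measurableSet_Ico).preimage (MeasurableEquiv.measurable _)

lemma volume_cube (x : Site d) : volume (cube x) = 1 := by
  rw [cube, (EuclideanSpace.volume_preserving_symm_measurableEquiv_toLp (Fin d)).measure_preimage_equiv,
    volume_pi_pi]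
  have h : ∀ i : Fin d, volume (Set.Ico ((x i : ℝ) - 2⁻¹) ((x i : ℝ) + 2⁻¹)) = 1 := by
    intro i
    rw [Real.volume_Ico]
    norm_num
  simp [h]

lemma cube_disjoint {x y : Site d} (hxy : x ≠ y) : Disjoint (cube x) (cube y) := by
  rw [Set.disjoint_left]
  intro z hzx hzy
  obtain ⟨i, hi⟩ := Function.ne_iff.1 hxy
  obtain ⟨hx1, hx2⟩ := mem_cube.1 hzx i
  obtain ⟨hy1, hy2⟩ := mem_cube.1 hzy i
  have h1 : (1 : ℝ) ≤ |((x i - y i : ℤ) : ℝ)| := by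
    exact_mod_cast Int.one_le_abs (sub_ne_zero.2 hi)
  push_cast at h1
  have h2 : |(x i : ℝ) - (y i : ℝ)| < 1 := abs_lt.2 ⟨by linarith, by linarith⟩
  linarith

lemma norm_sub_emb_le {x : Site d} {z : EuclideanSpace ℝ (Fin d)} (hz : z ∈ cube x) :
    ‖z - emb x‖ ≤ Real.sqrt d := by
  rw [EuclideanSpace.norm_eq]
  apply Real.sqrt_le_sqrt
  have h : ∀ i : Fin d, ‖(z - emb x) i‖ ^ 2 ≤ 1 := by
    intro i
    obtain ⟨h1, h2⟩ := mem_cube.1 hz i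
    have hzi : (z - emb x) i = z i - (x i : ℝ) := by simp [emb]
    rw [hzi, Real.norm_eq_abs, sq_abs]
    nlinarith
  calc ∑ i, ‖(z - emb x) i‖ ^ 2 ≤ ∑ _i : Fin d, (1 : ℝ) :=
        Finset.sum_le_sum fun i _ => h i
    _ = d := by simp

lemma ballVol_pos (d : ℕ) : 0 < ballVol d :=
  ENNReal.toReal_pos (measure_ball_pos volume 0 one_pos).ne' measure_ball_lt_top.ne

lemma lball_finite (d n : ℕ) (hd : 1 ≤ d) : (lball d n).Finite := by
  have hω := ballVol_pos d
  set B : ℝ := max 1 ((n : ℝ) / ballVol d) with hB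
  have hB1 : (1 : ℝ) ≤ B := le_max_left _ _
  have hbound : ∀ x ∈ lball d n, enorm x ≤ B := by
    intro x hx
    by_contra hcon
    push_neg at hcon
    have h1 : (1 : ℝ) ≤ enorm x := le_of_lt (lt_of_le_of_lt hB1 hcon)
    have h2 : enorm x ≤ enorm x ^ d := le_self_pow₀ h1 (by omega)
    have h3 : (n : ℝ) / ballVol d < enorm x ^ d :=
      lt_of_le_of_lt (le_max_right _ _) (lt_of_lt_of_le hcon h2)
    have h4 : (n : ℝ) < ballVol d * enorm x ^ d := by
      rw [div_lt_iff₀ hω] at h3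
      linarith [h3]
    exact absurd hx (by simp only [lball, Set.mem_setOf_eq]; linarith)
  set M : ℤ := ⌈B⌉ with hM
  apply Set.Finite.subset (Set.Finite.pi fun _ : Fin d => Set.finite_Icc (-M) M)
  intro x hx
  have hxB := hbound x hx
  have hsq : ∀ i, ((x i : ℝ)) ^ 2 ≤ B ^ 2 := by
    intro i
    have h5 : ((x i : ℝ)) ^ 2 ≤ nsq x := by
      rw [nsq]
      exact Finset.single_le_sum (f := fun j => ((x j : ℝ)) ^ 2)
        (fun j _ => sq_nonneg _) (Finset.mem_univ i)
    have h6 : nsq x = enorm x ^ 2 := by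
      rw [enorm, Real.sq_sqrt (nsq_nonneg x)]
    nlinarith [enorm_nonneg' x]
  intro i _
  simp only [Set.mem_Icc]
  have hBnn : (0:ℝ) ≤ B := by linarith
  have h7 : |(x i : ℝ)| ≤ B := by
    have := hsq i
    rw [abs_le]
    constructor <;> nlinarith
  have h8 : ((x i : ℝ)) ≤ (M : ℝ) := le_trans (le_of_abs_le h7) (Int.le_ceil B)
  have h9 : (-(M : ℝ)) ≤ (x i : ℝ) := by
    have := neg_le_of_abs_le h7
    have := Int.le_ceil B
    linarith
  constructor
  · exact_mod_cast h9
  · exact_mod_cast h8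

lemma pow_sub_pow_le' {a b : ℝ} (hb : 0 ≤ b) (hba : b ≤ a) (k : ℕ) :
    a ^ k - b ^ k ≤ (k : ℝ) * a ^ (k - 1) * (a - b) := by
  have ha : 0 ≤ a := hb.trans hba
  rw [← geom_sum₂_mul a b k]
  have hsum : (∑ i ∈ Finset.range k, a ^ i * b ^ (k - 1 - i)) ≤ (k : ℝ) * a ^ (k - 1) := by
    calc (∑ i ∈ Finset.range k, a ^ i * b ^ (k - 1 - i))
        ≤ ∑ _i ∈ Finset.range k, a ^ (k - 1) := by
          apply Finset.sum_le_sum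
          intro i hi
          have hik : i ≤ k - 1 := by
            have := Finset.mem_range.1 hi; omega
          calc a ^ i * b ^ (k - 1 - i) ≤ a ^ i * a ^ (k - 1 - i) := by
                apply mul_le_mul_of_nonneg_left (pow_le_pow_left₀ hb hba _) (pow_nonneg ha _)
            _ = a ^ (k - 1) := by rw [← pow_add]; congr 1; omega
      _ = (k : ℝ) * a ^ (k - 1) := by
          rw [Finset.sum_const, Finset.card_range, nsmul_eq_mul]
  exact mul_le_mul_of_nonneg_right hsum (sub_nonneg.2 hba)

lemma integral_ball_sq (d : ℕ) (hd : 1 ≤ d) (r : ℝ) (hr : 0 ≤ r) :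
    ∫ z in Metric.ball (0 : EuclideanSpace ℝ (Fin d)) r, ‖z‖ ^ 2
      = ballVol d * ((d : ℝ) / ((d : ℝ) + 2)) * r ^ (d + 2) := by
  haveI : Nontrivial (EuclideanSpace ℝ (Fin d)) :=
    Module.nontrivial_of_finrank_pos (R := ℝ) (by simp [finrank_euclideanSpace_fin]; omega)
  set f : ℝ → ℝ := Set.indicator (Set.Ico 0 r) (fun y => y ^ 2) with hf
  have h1 : ∀ x : EuclideanSpace ℝ (Fin d), f ‖x‖
      = (Metric.ball (0 : EuclideanSpace ℝ (Fin d)) r).indicator (fun z => ‖z‖ ^ 2) x := by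
    intro x
    by_cases hx : ‖x‖ < r <;>
      simp [hf, Set.indicator, mem_ball_zero_iff, hx, norm_nonneg]
  have h2 : ∫ z in Metric.ball (0 : EuclideanSpace ℝ (Fin d)) r, ‖z‖ ^ 2
      = ∫ x : EuclideanSpace ℝ (Fin d), f ‖x‖ := by
    rw [← integral_indicator measurableSet_ball]
    exact integral_congr_ae (Filter.Eventually.of_forall fun x => (h1 x).symm)
  rw [h2, MeasureTheory.integral_fun_norm_addHaar volume f]
  have hdim : Module.finrank ℝ (EuclideanSpace ℝ (Fin d)) = d := finrank_euclideanSpace_fin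
  rw [hdim]
  have h3 : ∫ y in Ioi (0:ℝ), y ^ (d - 1) • f y = r ^ (d + 2) / ((d : ℝ) + 2) := by
    have e1 : ∀ y : ℝ, y ^ (d - 1) • f y
        = Set.indicator (Set.Ico (0:ℝ) r) (fun y => y ^ (d + 1)) y := by
      intro y
      by_cases hy : y ∈ Set.Ico (0:ℝ) r <;>
        simp [hf, Set.indicator, hy, smul_eq_mul, ← pow_add]
      congr 1
      omega
    simp_rw [e1]
    rw [setIntegral_indicator measurableSet_Ico]
    have hinter : Ioi (0:ℝ) ∩ Ico 0 r = Ioo 0 r := by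
      ext y
      simp only [mem_inter_iff, mem_Ioi, mem_Ico, mem_Ioo]
      constructor
      · rintro ⟨hy1, _, hy3⟩; exact ⟨hy1, hy3⟩
      · rintro ⟨hy1, hy2⟩; exact ⟨hy1, hy1.le, hy2⟩
    rw [hinter, ← MeasureTheory.integral_Ioc_eq_integral_Ioo,
      ← intervalIntegral.integral_of_le hr, integral_pow]
    push_cast
    ring
  rw [h3]
  have hbv : volume.real (Metric.ball (0 : EuclideanSpace ℝ (Fin d)) 1) = ballVol d := rfl
  rw [hbv, nsmul_eq_mul, smul_eq_mul]
  have hd2 : (d : ℝ) + 2 ≠ 0 := by positivity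
  field_simp

end PsiAux

theorem psi_lball_asymp (d : ℕ) (hd : 1 ≤ d) :
    ∃ C : ℝ, ∀ n : ℕ, 1 ≤ n →
      |psi (lball d n) - (d : ℝ) / ((d : ℝ) + 2) * ballVol d ^ (-(2 : ℝ) / (d : ℝ))
          * (n : ℝ) ^ (1 + 2 / (d : ℝ))|
        ≤ C * (n : ℝ) ^ (1 + 1 / (d : ℝ)) := by
  classical
  haveI : Nontrivial (EuclideanSpace ℝ (Fin d)) :=
    Module.nontrivial_of_finrank_pos (R := ℝ) (by simp [finrank_euclideanSpace_fin]; omega)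
  have hω : 0 < ballVol d := ballVol_pos d
  have hdR : (0 : ℝ) < d := by exact_mod_cast hd
  have hdne : (d : ℝ) ≠ 0 := ne_of_gt hdR
  set sd : ℝ := Real.sqrt d with hsddef
  have hsd0 : 0 ≤ sd := Real.sqrt_nonneg _
  set K : ℝ := ballVol d ^ (-(1 : ℝ) / d) + sd with hKdef
  have hK0 : 0 < K := by
    have h : (0:ℝ) < ballVol d ^ (-(1 : ℝ) / d) := Real.rpow_pos_of_pos hω _
    rw [hKdef]
    linarith
  refine ⟨2 * sd * ballVol d * ((d : ℝ) + 1) * K ^ (d + 1), ?_⟩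
  intro n hn
  have hn1 : (1 : ℝ) ≤ (n : ℝ) := by exact_mod_cast hn
  have hn0 : (0 : ℝ) < (n : ℝ) := by linarith
  set R : ℝ := ((n : ℝ) / ballVol d) ^ ((1 : ℝ) / d) with hRdef
  have hR0 : 0 < R := Real.rpow_pos_of_pos (by positivity) _
  have hRpow : R ^ d = (n : ℝ) / ballVol d := by
    rw [hRdef, ← Real.rpow_natCast (((n : ℝ) / ballVol d) ^ ((1 : ℝ) / d)) d,
      ← Real.rpow_mul (by positivity)]
    rw [show (1 / (d : ℝ)) * (d : ℝ) = 1 by field_simp, Real.rpow_one]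
  have hfin : (lball d n).Finite := lball_finite d n hd
  set s : Finset (Site d) := hfin.toFinset with hsdef
  have hpsi : psi (lball d n) = ∑ x ∈ s, nsq x :=
    finsum_mem_eq_finite_toFinset_sum _ hfin
  have hmem_s : ∀ x : Site d, x ∈ s ↔ enorm x < R := by
    intro x
    rw [hsdef, Set.Finite.mem_toFinset]
    simp only [lball, Set.mem_setOf_eq]
    constructor
    · intro h
      have h1 : enorm x ^ d < R ^ d := by
        rw [hRpow, lt_div_iff₀' hω]
        exact h
      exact (pow_lt_pow_iff_left₀ (enorm_nonneg' x) hR0.le (by omega)).1 h1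
    · intro h
      have h1 : enorm x ^ d < R ^ d :=
        (pow_lt_pow_iff_left₀ (enorm_nonneg' x) hR0.le (by omega)).2 h
      rw [hRpow, lt_div_iff₀' hω] at h1
      exact h1
  set A : ℝ := R + sd with hAdef
  have hA0 : 0 < A := by linarith
  set U : Set (EuclideanSpace ℝ (Fin d)) := ⋃ x ∈ s, cube x with hUdef
  have hcont : Continuous (fun z : EuclideanSpace ℝ (Fin d) => ‖z‖ ^ 2) :=
    continuous_norm.pow 2
  have hintK : IntegrableOn (fun z : EuclideanSpace ℝ (Fin d) => ‖z‖ ^ 2)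
      (Metric.closedBall (0 : EuclideanSpace ℝ (Fin d)) A) volume :=
    hcont.continuousOn.integrableOn_compact (isCompact_closedBall _ _)
  have hUsub : U ⊆ Metric.ball (0 : EuclideanSpace ℝ (Fin d)) A := by
    intro z hz
    obtain ⟨x, hxs, hzx⟩ := Set.mem_iUnion₂.1 hz
    have hex : enorm x < R := (hmem_s x).1 hxs
    have h1 : ‖z‖ ≤ ‖emb x‖ + ‖z - emb x‖ := by
      calc ‖z‖ = ‖emb x + (z - emb x)‖ := by rw [add_sub_cancel]
        _ ≤ ‖emb x‖ + ‖z - emb x‖ := norm_add_le _ _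
    rw [norm_emb] at h1
    have h2 := norm_sub_emb_le hzx
    rw [Metric.mem_ball, dist_zero_right]
    rw [hAdef]
    linarith
  have hsubU : Metric.ball (0 : EuclideanSpace ℝ (Fin d)) (R - sd) ⊆ U := by
    intro z hz
    rw [Metric.mem_ball, dist_zero_right] at hz
    set x : Site d := fun i => ⌊z i + 2⁻¹⌋ with hxdef
    have hzx : z ∈ cube x := by
      rw [mem_cube]
      intro i
      have hfl := Int.floor_le (z i + 2⁻¹)
      have hfl2 := Int.lt_floor_add_one (z i + 2⁻¹)
      constructor
      · simp only [hxdef]; linarith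
      · simp only [hxdef]; linarith
    have hxs : x ∈ s := by
      rw [hmem_s]
      have h1 : ‖emb x‖ ≤ ‖z‖ + ‖emb x - z‖ := by
        calc ‖emb x‖ = ‖z + (emb x - z)‖ := by rw [add_sub_cancel]
          _ ≤ ‖z‖ + ‖emb x - z‖ := norm_add_le _ _
      rw [norm_emb, norm_sub_rev] at h1
      have h2 := norm_sub_emb_le hzx
      linarith
    exact Set.mem_biUnion hxs hzx
  have hpair : (↑s : Set (Site d)).Pairwise (Function.onFun Disjoint cube) :=
    fun x _ y _ hxy => cube_disjoint hxy
  have hcube_sub : ∀ x ∈ s, cube x ⊆ Metric.closedBall (0 : EuclideanSpace ℝ (Fin d)) A := by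
    intro x hx
    exact (Set.subset_biUnion_of_mem hx).trans (hUsub.trans Metric.ball_subset_closedBall)
  have hcube_int : ∀ x ∈ s, IntegrableOn (fun z : EuclideanSpace ℝ (Fin d) => ‖z‖ ^ 2)
      (cube x) volume := fun x hx => hintK.mono_set (hcube_sub x hx)
  have hIU : ∫ z in U, ‖z‖ ^ 2 = ∑ x ∈ s, ∫ z in cube x, ‖z‖ ^ 2 :=
    integral_biUnion_finset s (fun x _ => measurableSet_cube x) hpair hcube_int
  have hvolU : volume U = s.card := by
    rw [hUdef, measure_biUnion_finset hpair (fun x _ => measurableSet_cube x)]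
    simp [volume_cube]
  have hcard : ((s.card : ℝ)) ≤ A ^ d * ballVol d := by
    have h : volume U ≤ volume (Metric.ball (0 : EuclideanSpace ℝ (Fin d)) A) :=
      measure_mono hUsub
    rw [hvolU, Measure.addHaar_ball (volume : MeasureTheory.Measure (EuclideanSpace ℝ (Fin d))) 0 hA0.le,
      finrank_euclideanSpace_fin] at h
    have hne : ENNReal.ofReal (A ^ d) * volume (Metric.ball (0 : EuclideanSpace ℝ (Fin d)) 1) ≠ ⊤ :=
      ENNReal.mul_ne_top ENNReal.ofReal_ne_top measure_ball_lt_top.ne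
    calc ((s.card : ℝ)) = ((s.card : ENNReal)).toReal := by simp
      _ ≤ (ENNReal.ofReal (A ^ d) * volume (Metric.ball (0 : EuclideanSpace ℝ (Fin d)) 1)).toReal :=
          ENNReal.toReal_mono hne h
      _ = A ^ d * ballVol d := by
          rw [ENNReal.toReal_mul, ENNReal.toReal_ofReal (by positivity)]
          rfl
  set B1 : ℝ := sd * (2 * A) with hB1def
  have hB1nn : 0 ≤ B1 := by positivity
  have hest : ∀ x ∈ s, |(∫ z in cube x, ‖z‖ ^ 2) - nsq x| ≤ B1 := by
    intro x hx
    have hvol : volume (cube x) < ⊤ := by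
      rw [volume_cube]; exact ENNReal.one_lt_top
    have hconst : ∫ _z in cube x, nsq x ∂(volume) = nsq x := by
      rw [setIntegral_const, measureReal_def, volume_cube]; simp
    have hsub : ∫ z in cube x, (‖z‖ ^ 2 - nsq x) = (∫ z in cube x, ‖z‖ ^ 2) - nsq x := by
      rw [integral_sub (hcube_int x hx) (integrableOn_const hvol.ne), hconst]
    rw [← hsub]
    have hbd : ∀ z ∈ cube x, ‖‖z‖ ^ 2 - nsq x‖ ≤ B1 := by
      intro z hz
      have hex : enorm x < R := (hmem_s x).1 hx
      have h1 : ‖z - emb x‖ ≤ sd := norm_sub_emb_le hz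
      have hzn : ‖z‖ ≤ A := by
        have h2 : ‖z‖ ≤ ‖emb x‖ + ‖z - emb x‖ := by
          calc ‖z‖ = ‖emb x + (z - emb x)‖ := by rw [add_sub_cancel]
            _ ≤ ‖emb x‖ + ‖z - emb x‖ := norm_add_le _ _
        rw [norm_emb] at h2
        rw [hAdef]; linarith
      have h3 : ‖z‖ ^ 2 - nsq x = (‖z‖ - ‖emb x‖) * (‖z‖ + ‖emb x‖) := by
        rw [← sq_norm_emb]; ring
      have h4 : |‖z‖ - ‖emb x‖| ≤ sd := le_trans (abs_norm_sub_norm_le z (emb x)) h1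
      have h5 : |‖z‖ + ‖emb x‖| ≤ 2 * A := by
        rw [abs_of_nonneg (by positivity), norm_emb]
        have : enorm x ≤ A := by rw [hAdef]; linarith
        linarith
      calc ‖‖z‖ ^ 2 - nsq x‖ = |‖z‖ - ‖emb x‖| * |‖z‖ + ‖emb x‖| := by
            rw [Real.norm_eq_abs, h3, abs_mul]
        _ ≤ sd * (2 * A) := mul_le_mul h4 h5 (abs_nonneg _) hsd0
        _ = B1 := hB1def.symm
    have hle := norm_setIntegral_le_of_norm_le_const hvol hbd
    rw [measureReal_def, volume_cube] at hle
    simpa using hle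
  have herr1 : |(∑ x ∈ s, nsq x) - ∫ z in U, ‖z‖ ^ 2| ≤ A ^ d * ballVol d * B1 := by
    rw [hIU, ← Finset.sum_sub_distrib]
    calc |∑ x ∈ s, (nsq x - ∫ z in cube x, ‖z‖ ^ 2)|
        ≤ ∑ x ∈ s, |nsq x - ∫ z in cube x, ‖z‖ ^ 2| := Finset.abs_sum_le_sum_abs _ _
      _ ≤ ∑ _x ∈ s, B1 := Finset.sum_le_sum fun x hx => by
          rw [abs_sub_comm]; exact hest x hx
      _ = s.card * B1 := by rw [Finset.sum_const, nsmul_eq_mul]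
      _ ≤ A ^ d * ballVol d * B1 := mul_le_mul_of_nonneg_right hcard hB1nn
  -- sandwich for the integral term
  set r₀ : ℝ := max (R - sd) 0 with hr₀def
  have hr₀0 : 0 ≤ r₀ := le_max_right _ _
  have hr₀A : r₀ ≤ A := max_le (by rw [hAdef]; linarith) (by linarith)
  have hAr₀ : A - r₀ ≤ 2 * sd := by
    have := le_max_left (R - sd) 0
    rw [hAdef]; linarith
  have hnonnegU : (0 : EuclideanSpace ℝ (Fin d) → ℝ)
      ≤ᵐ[volume.restrict (Metric.ball (0 : EuclideanSpace ℝ (Fin d)) A)]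
        fun z => ‖z‖ ^ 2 := Filter.Eventually.of_forall fun z => by positivity
  have hintBallA : IntegrableOn (fun z : EuclideanSpace ℝ (Fin d) => ‖z‖ ^ 2)
      (Metric.ball (0 : EuclideanSpace ℝ (Fin d)) A) volume :=
    hintK.mono_set Metric.ball_subset_closedBall
  have hLIU : (∫ z in Metric.ball (0 : EuclideanSpace ℝ (Fin d)) (R - sd), ‖z‖ ^ 2)
      ≤ ∫ z in U, ‖z‖ ^ 2 :=
    setIntegral_mono_set (hintK.mono_set (hUsub.trans Metric.ball_subset_closedBall))
      (Filter.Eventually.of_forall fun z => by positivity)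
      (HasSubset.Subset.eventuallyLE hsubU)
  have hIUH : (∫ z in U, ‖z‖ ^ 2)
      ≤ ∫ z in Metric.ball (0 : EuclideanSpace ℝ (Fin d)) A, ‖z‖ ^ 2 :=
    setIntegral_mono_set hintBallA (Filter.Eventually.of_forall fun z => by positivity)
      (HasSubset.Subset.eventuallyLE hUsub)
  have hLM : (∫ z in Metric.ball (0 : EuclideanSpace ℝ (Fin d)) (R - sd), ‖z‖ ^ 2)
      ≤ ∫ z in Metric.ball (0 : EuclideanSpace ℝ (Fin d)) R, ‖z‖ ^ 2 :=
    setIntegral_mono_set (hintK.mono_set ((Metric.ball_subset_ball (by rw [hAdef]; linarith)).trans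
        Metric.ball_subset_closedBall))
      (Filter.Eventually.of_forall fun z => by positivity)
      (HasSubset.Subset.eventuallyLE (Metric.ball_subset_ball (by linarith)))
  have hMH : (∫ z in Metric.ball (0 : EuclideanSpace ℝ (Fin d)) R, ‖z‖ ^ 2)
      ≤ ∫ z in Metric.ball (0 : EuclideanSpace ℝ (Fin d)) A, ‖z‖ ^ 2 :=
    setIntegral_mono_set hintBallA (Filter.Eventually.of_forall fun z => by positivity)
      (HasSubset.Subset.eventuallyLE (Metric.ball_subset_ball (by rw [hAdef]; linarith)))
  have hHval : (∫ z in Metric.ball (0 : EuclideanSpace ℝ (Fin d)) A, ‖z‖ ^ 2)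
      = ballVol d * ((d : ℝ) / ((d : ℝ) + 2)) * A ^ (d + 2) :=
    integral_ball_sq d hd A hA0.le
  have hLlow : ballVol d * ((d : ℝ) / ((d : ℝ) + 2)) * r₀ ^ (d + 2)
      ≤ ∫ z in Metric.ball (0 : EuclideanSpace ℝ (Fin d)) (R - sd), ‖z‖ ^ 2 := by
    rcases le_or_gt 0 (R - sd) with h | h
    · rw [hr₀def, max_eq_left h, integral_ball_sq d hd _ h]
    · rw [hr₀def, max_eq_right h.le, zero_pow (by omega), mul_zero]
      exact setIntegral_nonneg measurableSet_ball fun z _ => by positivity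
  have h2a : |(∫ z in U, ‖z‖ ^ 2) - ∫ z in Metric.ball (0 : EuclideanSpace ℝ (Fin d)) R, ‖z‖ ^ 2|
      ≤ (∫ z in Metric.ball (0 : EuclideanSpace ℝ (Fin d)) A, ‖z‖ ^ 2)
        - ∫ z in Metric.ball (0 : EuclideanSpace ℝ (Fin d)) (R - sd), ‖z‖ ^ 2 :=
    abs_sub_le_iff.2 ⟨by linarith, by linarith⟩
  have h2b : (∫ z in Metric.ball (0 : EuclideanSpace ℝ (Fin d)) A, ‖z‖ ^ 2)
        - (∫ z in Metric.ball (0 : EuclideanSpace ℝ (Fin d)) (R - sd), ‖z‖ ^ 2)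
      ≤ 2 * sd * (d : ℝ) * ballVol d * A ^ (d + 1) := by
    have hps := pow_sub_pow_le' hr₀0 hr₀A (d + 2)
    have hsimp : ((d + 2 : ℕ) : ℝ) * A ^ (d + 2 - 1) * (A - r₀)
        = ((d : ℝ) + 2) * A ^ (d + 1) * (A - r₀) := by
      push_cast
      congr 2
    have h1 : A ^ (d + 2) - r₀ ^ (d + 2) ≤ ((d : ℝ) + 2) * A ^ (d + 1) * (A - r₀) := by
      rw [← hsimp]; exact hps
    have h2 : ((d : ℝ) + 2) * A ^ (d + 1) * (A - r₀)
        ≤ ((d : ℝ) + 2) * A ^ (d + 1) * (2 * sd) :=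
      mul_le_mul_of_nonneg_left hAr₀ (by positivity)
    have hcoef : (0 : ℝ) ≤ ballVol d * ((d : ℝ) / ((d : ℝ) + 2)) := by positivity
    have e1 : ballVol d * ((d : ℝ) / ((d : ℝ) + 2)) * (A ^ (d + 2) - r₀ ^ (d + 2))
        = ballVol d * ((d : ℝ) / ((d : ℝ) + 2)) * A ^ (d + 2)
          - ballVol d * ((d : ℝ) / ((d : ℝ) + 2)) * r₀ ^ (d + 2) := by ring
    have e2 : ballVol d * ((d : ℝ) / ((d : ℝ) + 2)) * (((d : ℝ) + 2) * A ^ (d + 1) * (2 * sd))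
        = 2 * sd * (d : ℝ) * ballVol d * A ^ (d + 1) := by
      field_simp
    have h3 : ballVol d * ((d : ℝ) / ((d : ℝ) + 2)) * (A ^ (d + 2) - r₀ ^ (d + 2))
        ≤ ballVol d * ((d : ℝ) / ((d : ℝ) + 2)) * (((d : ℝ) + 2) * A ^ (d + 1) * (2 * sd)) :=
      mul_le_mul_of_nonneg_left (h1.trans h2) hcoef
    rw [e2] at h3
    rw [hHval]
    linarith [hLlow, e1 ▸ h3]
  -- value of the main term
  have hMeq : (d : ℝ) / ((d : ℝ) + 2) * ballVol d ^ (-(2 : ℝ) / (d : ℝ))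
        * (n : ℝ) ^ (1 + 2 / (d : ℝ))
      = ∫ z in Metric.ball (0 : EuclideanSpace ℝ (Fin d)) R, ‖z‖ ^ 2 := by
    rw [integral_ball_sq d hd R hR0.le]
    have hRp : R ^ (d + 2) = ((n : ℝ) / ballVol d) ^ (((d : ℝ) + 2) / d) := by
      rw [hRdef, ← Real.rpow_natCast (((n : ℝ) / ballVol d) ^ ((1 : ℝ) / d)) (d + 2),
        ← Real.rpow_mul (by positivity)]
      congr 1
      push_cast
      field_simp
    have hdiv : ((n : ℝ) / ballVol d) ^ (((d : ℝ) + 2) / d)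
        = (n : ℝ) ^ (((d : ℝ) + 2) / d) / ballVol d ^ (((d : ℝ) + 2) / d) :=
      Real.div_rpow hn0.le hω.le _
    have hnexp : (n : ℝ) ^ (((d : ℝ) + 2) / d) = (n : ℝ) ^ (1 + 2 / (d : ℝ)) := by
      congr 1
      field_simp
    have hωexp : ballVol d / ballVol d ^ (((d : ℝ) + 2) / d)
        = ballVol d ^ (-(2 : ℝ) / (d : ℝ)) := by
      have h := (Real.rpow_sub hω 1 (((d : ℝ) + 2) / d)).symm
      rw [Real.rpow_one] at h
      rw [h]
      congr 1
      field_simp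
      ring
    rw [hRp, hdiv, hnexp,
      show ballVol d * ((d : ℝ) / ((d : ℝ) + 2))
          * ((n : ℝ) ^ (1 + 2 / (d : ℝ)) / ballVol d ^ (((d : ℝ) + 2) / d))
        = (d : ℝ) / ((d : ℝ) + 2) * (ballVol d / ballVol d ^ (((d : ℝ) + 2) / d))
          * (n : ℝ) ^ (1 + 2 / (d : ℝ)) from by ring, hωexp]
  -- final assembly
  rw [hpsi]
  have habs : |(∑ x ∈ s, nsq x) - (d : ℝ) / ((d : ℝ) + 2) * ballVol d ^ (-(2 : ℝ) / (d : ℝ))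
        * (n : ℝ) ^ (1 + 2 / (d : ℝ))|
      ≤ A ^ d * ballVol d * B1 + 2 * sd * (d : ℝ) * ballVol d * A ^ (d + 1) := by
    rw [hMeq]
    calc |(∑ x ∈ s, nsq x) - ∫ z in Metric.ball (0 : EuclideanSpace ℝ (Fin d)) R, ‖z‖ ^ 2|
        ≤ |(∑ x ∈ s, nsq x) - ∫ z in U, ‖z‖ ^ 2|
          + |(∫ z in U, ‖z‖ ^ 2)
              - ∫ z in Metric.ball (0 : EuclideanSpace ℝ (Fin d)) R, ‖z‖ ^ 2| :=
          abs_sub_le _ _ _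
      _ ≤ A ^ d * ballVol d * B1 + 2 * sd * (d : ℝ) * ballVol d * A ^ (d + 1) :=
          add_le_add herr1 (h2a.trans h2b)
  have hA1 : A ^ d * ballVol d * B1 = 2 * sd * ballVol d * A ^ (d + 1) := by
    rw [hB1def, pow_succ]; ring
  have hN1 : (1 : ℝ) ≤ (n : ℝ) ^ ((1 : ℝ) / d) := Real.one_le_rpow hn1 (by positivity)
  have hRle : R ≤ (n : ℝ) ^ ((1 : ℝ) / d) * ballVol d ^ (-(1 : ℝ) / d) := by
    rw [hRdef, Real.div_rpow hn0.le hω.le, neg_div, Real.rpow_neg hω.le, div_eq_mul_inv]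
  have hAK : A ≤ K * (n : ℝ) ^ ((1 : ℝ) / d) := by
    have h1 : sd ≤ sd * (n : ℝ) ^ ((1 : ℝ) / d) := le_mul_of_one_le_right hsd0 hN1
    have h2 : R ≤ ballVol d ^ (-(1 : ℝ) / d) * (n : ℝ) ^ ((1 : ℝ) / d) := by
      rw [mul_comm]; exact hRle
    calc A = R + sd := hAdef
      _ ≤ ballVol d ^ (-(1 : ℝ) / d) * (n : ℝ) ^ ((1 : ℝ) / d)
            + sd * (n : ℝ) ^ ((1 : ℝ) / d) := add_le_add h2 h1
      _ = K * (n : ℝ) ^ ((1 : ℝ) / d) := by rw [hKdef]; ring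
  have hpowA : A ^ (d + 1) ≤ K ^ (d + 1) * (n : ℝ) ^ (1 + 1 / (d : ℝ)) := by
    have h1 : A ^ (d + 1) ≤ (K * (n : ℝ) ^ ((1 : ℝ) / d)) ^ (d + 1) :=
      pow_le_pow_left₀ hA0.le hAK _
    have h2 : (K * (n : ℝ) ^ ((1 : ℝ) / d)) ^ (d + 1)
        = K ^ (d + 1) * (n : ℝ) ^ (1 + 1 / (d : ℝ)) := by
      rw [mul_pow]
      congr 1
      rw [← Real.rpow_natCast ((n : ℝ) ^ ((1 : ℝ) / d)) (d + 1), ← Real.rpow_mul hn0.le]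
      congr 1
      push_cast
      field_simp
    rw [← h2]; exact h1
  calc |(∑ x ∈ s, nsq x) - (d : ℝ) / ((d : ℝ) + 2) * ballVol d ^ (-(2 : ℝ) / (d : ℝ))
        * (n : ℝ) ^ (1 + 2 / (d : ℝ))|
      ≤ A ^ d * ballVol d * B1 + 2 * sd * (d : ℝ) * ballVol d * A ^ (d + 1) := habs
    _ = 2 * sd * ballVol d * ((d : ℝ) + 1) * A ^ (d + 1) := by rw [hA1]; ring
    _ ≤ 2 * sd * ballVol d * ((d : ℝ) + 1) * (K ^ (d + 1) * (n : ℝ) ^ (1 + 1 / (d : ℝ))) :=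
        mul_le_mul_of_nonneg_left hpowA (by positivity)
    _ = 2 * sd * ballVol d * ((d : ℝ) + 1) * K ^ (d + 1) * (n : ℝ) ^ (1 + 1 / (d : ℝ)) := by
        ring


end RotorRouterPaper
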